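/- arXiv:1909.05487 — 3 statements merged into one kernel-verified Lean document; each statement's English description precedes it below -/
import Mathlib

section
/- Fix positive integers n, m, K, μ, let 𝒢ₙ be a (μ, K, ρ)-sparse distribution on simple graphs with n vertices, let Y(·) be a measurable graph-matrix assignment, and let B be an m×n real random matrix, independent of G ~ 𝒢ₙ, that almost surely satisfies spark(B) > 2K and δ_{2μ} + δ_{3μ} < 1, where δ_s denotes the restricted isometry constant of B of order s. Set A = B·Y(G) (noiseless measurements). Then there exists a measurable estimator X = f(A, B) (realized by the three-stage recovery scheme) such that P(X ≠ Y(G)) ≤ ρ. -/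
open MeasureTheory ProbabilityTheory

noncomputable section

instance {n : ℕ} : MeasurableSpace (SimpleGraph (Fin n)) := ⊤

/-- The degree of vertex `v` in the simple graph `G`. -/
def gdeg {n : ℕ} (G : SimpleGraph (Fin n)) (v : Fin n) : ℕ :=
  Set.ncard {w | G.Adj v w}

/-- `Y` is a graph matrix of the simple graph `G`: a symmetric real matrix with zero
diagonal whose off-diagonal entry `(i,j)` is nonzero exactly when `{i,j}` is an edge. -/
def IsGraphMatrix {n : ℕ} (G : SimpleGraph (Fin n)) (Y : Fin n → Fin n → ℝ) : Prop :=
  (∀ i j, Y i j = Y j i) ∧ (∀ i, Y i i = 0) ∧ (∀ i j, i ≠ j → (Y i j ≠ 0 ↔ G.Adj i j))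

/-- Matrix product of an `m × n` matrix with an `n × p` matrix. -/
def matMul {m n p : ℕ} (B : Fin m → Fin n → ℝ) (Y : Fin n → Fin p → ℝ) :
    Fin m → Fin p → ℝ :=
  fun i j => ∑ k, B i k * Y k j

/-- The spark of a matrix: the smallest number of columns that are linearly dependent
(`⊤` if every collection of columns is linearly independent). -/
def spark {m n : ℕ} (B : Fin m → Fin n → ℝ) : ℕ∞ :=
  sInf {k : ℕ∞ | ∃ s : Finset (Fin n), (s.card : ℕ∞) = k ∧
    ¬ LinearIndependent ℝ (fun j : {x // x ∈ s} => (fun i => B i j.1))}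

/-- The restricted isometry constant of order `s` of `B`: the smallest `δ ≥ 0` such that
`(1−δ)‖x‖₂² ≤ ‖Bx‖₂² ≤ (1+δ)‖x‖₂²` for every `x` with at most `s` nonzero entries. -/
def ric {m n : ℕ} (B : Fin m → Fin n → ℝ) (s : ℕ) : ℝ :=
  sInf {δ : ℝ | 0 ≤ δ ∧ ∀ x : Fin n → ℝ, Set.ncard {j | x j ≠ 0} ≤ s →
    (1 - δ) * (∑ j, x j ^ 2) ≤ (∑ i, (∑ j, B i j * x j) ^ 2) ∧
      (∑ i, (∑ j, B i j * x j) ^ 2) ≤ (1 + δ) * (∑ j, x j ^ 2)}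

/-! ### Auxiliary lemmas -/

/-- The defining set for `ric` is nonempty. -/
lemma ric_set_nonempty {m n : ℕ} (B : Fin m → Fin n → ℝ) (s : ℕ) :
    {δ : ℝ | 0 ≤ δ ∧ ∀ x : Fin n → ℝ, Set.ncard {j | x j ≠ 0} ≤ s →
      (1 - δ) * (∑ j, x j ^ 2) ≤ (∑ i, (∑ j, B i j * x j) ^ 2) ∧
        (∑ i, (∑ j, B i j * x j) ^ 2) ≤ (1 + δ) * (∑ j, x j ^ 2)}.Nonempty := by
  classical
  set C : ℝ := ∑ i, ∑ j, (B i j) ^ 2 with hC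
  have hC0 : 0 ≤ C := Finset.sum_nonneg fun i _ => Finset.sum_nonneg fun j _ => sq_nonneg _
  refine ⟨1 + C, by positivity, fun x _ => ?_⟩
  have hx0 : 0 ≤ ∑ j, x j ^ 2 := Finset.sum_nonneg fun j _ => sq_nonneg _
  have hBx0 : 0 ≤ ∑ i, (∑ j, B i j * x j) ^ 2 :=
    Finset.sum_nonneg fun i _ => sq_nonneg _
  have hupper : (∑ i, (∑ j, B i j * x j) ^ 2) ≤ C * (∑ j, x j ^ 2) := by
    rw [hC, Finset.sum_mul]
    refine Finset.sum_le_sum fun i _ => ?_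
    exact Finset.sum_mul_sq_le_sq_mul_sq Finset.univ (fun j => B i j) x
  constructor
  · have : (1 - (1 + C)) * (∑ j, x j ^ 2) ≤ 0 := by
      have : 1 - (1 + C) ≤ 0 := by linarith
      exact mul_nonpos_of_nonpos_of_nonneg this hx0
    linarith
  · have : C * (∑ j, x j ^ 2) ≤ (1 + (1 + C)) * (∑ j, x j ^ 2) := by
      apply mul_le_mul_of_nonneg_right _ hx0
      linarith
    linarith

lemma ric_nonneg {m n : ℕ} (B : Fin m → Fin n → ℝ) (s : ℕ) : 0 ≤ ric B s :=
  Real.sInf_nonneg fun _ hδ => hδ.1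

/-- If the RIC of order `s` is `< 1`, a vector with at most `s` nonzero entries
in the kernel of `B` vanishes. -/
lemma ric_null {m n : ℕ} (B : Fin m → Fin n → ℝ) (s : ℕ) (h : ric B s < 1)
    (x : Fin n → ℝ) (hsupp : Set.ncard {j | x j ≠ 0} ≤ s)
    (hker : ∀ i, ∑ j, B i j * x j = 0) : x = 0 := by
  classical
  have hbdd : BddBelow {δ : ℝ | 0 ≤ δ ∧ ∀ x : Fin n → ℝ, Set.ncard {j | x j ≠ 0} ≤ s →
      (1 - δ) * (∑ j, x j ^ 2) ≤ (∑ i, (∑ j, B i j * x j) ^ 2) ∧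
        (∑ i, (∑ j, B i j * x j) ^ 2) ≤ (1 + δ) * (∑ j, x j ^ 2)} :=
    ⟨0, fun _ hδ => hδ.1⟩
  obtain ⟨δ, hδmem, hδlt⟩ := (csInf_lt_iff hbdd (ric_set_nonempty B s)).mp h
  have hlow := (hδmem.2 x hsupp).1
  have hBx : (∑ i, (∑ j, B i j * x j) ^ 2) = 0 := by
    apply Finset.sum_eq_zero; intro i _; rw [hker i]; ring
  rw [hBx] at hlow
  have hx0 : 0 ≤ ∑ j, x j ^ 2 := Finset.sum_nonneg fun j _ => sq_nonneg _
  have hsum0 : (∑ j, x j ^ 2) = 0 := by nlinarith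
  funext j
  have := (Finset.sum_eq_zero_iff_of_nonneg (fun j _ => sq_nonneg (x j))).mp hsum0 j
    (Finset.mem_univ j)
  simpa using pow_eq_zero_iff (n := 2) (by norm_num) |>.mp this

/-- If `spark B > 2K`, a vector supported on at most `2K` coordinates in the
kernel of `B` vanishes. -/
lemma spark_null {m n K : ℕ} (B : Fin m → Fin n → ℝ) (hspark : (2 * K : ℕ∞) < spark B)
    (x : Fin n → ℝ) (s : Finset (Fin n)) (hcard : s.card ≤ 2 * K)
    (hsupp : ∀ j, x j ≠ 0 → j ∈ s)
    (hker : ∀ i, ∑ j, B i j * x j = 0) : x = 0 := by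
  classical
  have hli : LinearIndependent ℝ (fun j : {x // x ∈ s} => (fun i => B i j.1)) := by
    by_contra hnot
    have : spark B ≤ (s.card : ℕ∞) := sInf_le ⟨s, rfl, hnot⟩
    have : spark B ≤ (2 * K : ℕ∞) := this.trans (by exact_mod_cast hcard)
    exact absurd hspark (not_lt.mpr this)
  have hzero : ∀ j ∈ s, x j = 0 := by
    have hsum : (∑ j : {y // y ∈ s}, x j.1 • (fun i => B i j.1)) = 0 := by
      funext i
      simp only [Finset.sum_apply, Pi.smul_apply, smul_eq_mul, Pi.zero_apply]
      rw [Finset.univ_eq_attach, Finset.sum_attach s (fun j => x j * B i j)]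
      have : ∑ j ∈ s, x j * B i j = ∑ j, x j * B i j := by
        apply Finset.sum_subset (Finset.subset_univ s)
        intro j _ hj
        by_cases hxj : x j = 0
        · rw [hxj]; ring
        · exact absurd (hsupp j hxj) hj
      rw [this]
      have := hker i
      calc ∑ j, x j * B i j = ∑ j, B i j * x j := by
            apply Finset.sum_congr rfl; intros; ring
        _ = 0 := hker i
    intro j hj
    exact Fintype.linearIndependent_iff.mp hli (fun j => x j.1) hsum ⟨j, hj⟩
  funext j
  by_cases hxj : x j = 0
  · simpa using hxj
  · simpa using hzero j (hsupp j hxj)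

/-- Uniqueness: two good graphs with the same measurements have the same graph matrix. -/
lemma graph_matrix_uniq {n m K μs : ℕ} (B : Fin m → Fin n → ℝ)
    (hspark : (2 * K : ℕ∞) < spark B) (hric : ric B (2 * μs) < 1)
    (g g' : SimpleGraph (Fin n)) (Yg Yg' : Fin n → Fin n → ℝ)
    (hYg : IsGraphMatrix g Yg) (hYg' : IsGraphMatrix g' Yg')
    (hg : Set.ncard {v : Fin n | μs < gdeg g v} ≤ K)
    (hg' : Set.ncard {v : Fin n | μs < gdeg g' v} ≤ K)
    (heq : matMul B Yg = matMul B Yg') : Yg = Yg' := by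
  classical
  obtain ⟨hsym, hdiag, hadj⟩ := hYg
  obtain ⟨hsym', hdiag', hadj'⟩ := hYg'
  set H : Set (Fin n) := {v | μs < gdeg g v} ∪ {v | μs < gdeg g' v} with hH
  -- column j of the difference is in the kernel of B
  have hker : ∀ j i, ∑ k, B i k * (Yg k j - Yg' k j) = 0 := by
    intro j i
    have h1 : matMul B Yg i j = matMul B Yg' i j := by rw [heq]
    simp only [matMul] at h1
    calc ∑ k, B i k * (Yg k j - Yg' k j)
        = (∑ k, B i k * Yg k j) - ∑ k, B i k * Yg' k j := by
          rw [← Finset.sum_sub_distrib]; apply Finset.sum_congr rfl; intros; ring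
      _ = 0 := by rw [h1]; ring
  -- support of column j is contained in the union of neighborhoods
  have hsupp : ∀ j k, Yg k j - Yg' k j ≠ 0 → g.Adj j k ∨ g'.Adj j k := by
    intro j k hne
    have hkj : k ≠ j := by
      rintro rfl; exact hne (by rw [hdiag, hdiag']; ring)
    have : Yg k j ≠ 0 ∨ Yg' k j ≠ 0 := by
      by_contra hcon
      push_neg at hcon
      exact hne (by rw [hcon.1, hcon.2]; ring)
    rcases this with h | h
    · exact Or.inl ((g.adj_comm j k).mpr ((hadj k j hkj).mp h))
    · exact Or.inr ((g'.adj_comm j k).mpr ((hadj' k j hkj).mp h))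
  -- Step 1: columns indexed by low-degree vertices vanish
  have hlow : ∀ j ∉ H, ∀ k, Yg k j = Yg' k j := by
    intro j hj k
    have hdeg : gdeg g j ≤ μs ∧ gdeg g' j ≤ μs := by
      simp only [hH, Set.mem_union, Set.mem_setOf_eq, not_or, not_lt] at hj
      exact hj
    have hcard : Set.ncard {k | Yg k j - Yg' k j ≠ 0} ≤ 2 * μs := by
      have hsub : {k | Yg k j - Yg' k j ≠ 0} ⊆ {k | g.Adj j k} ∪ {k | g'.Adj j k} := by
        intro k hk; exact hsupp j k hk
      calc Set.ncard {k | Yg k j - Yg' k j ≠ 0}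
          ≤ Set.ncard ({k | g.Adj j k} ∪ {k | g'.Adj j k}) :=
            Set.ncard_le_ncard hsub (Set.toFinite _)
        _ ≤ Set.ncard {k | g.Adj j k} + Set.ncard {k | g'.Adj j k} :=
            Set.ncard_union_le _ _
        _ ≤ μs + μs := add_le_add hdeg.1 hdeg.2
        _ = 2 * μs := by ring
    have := ric_null B (2 * μs) hric (fun k => Yg k j - Yg' k j) hcard (hker j)
    have := congrFun this k
    simpa [sub_eq_zero] using this
  -- Step 2: columns indexed by high-degree vertices vanish
  have hall : ∀ j k, Yg k j = Yg' k j := by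
    intro j k
    by_cases hj : j ∈ H
    · -- support of column j is contained in H
      have hsuppH : ∀ k, Yg k j - Yg' k j ≠ 0 → k ∈ H := by
        intro k hk
        by_contra hkH
        have : Yg j k = Yg' j k := hlow k hkH j
        exact hk (by rw [hsym k j, hsym' k j, this]; ring)
      have hHfin : H.Finite := Set.toFinite _
      have hcard : hHfin.toFinset.card ≤ 2 * K := by
        rw [← Set.ncard_eq_toFinset_card H hHfin]
        calc H.ncard ≤ Set.ncard {v | μs < gdeg g v} + Set.ncard {v | μs < gdeg g' v} :=
              Set.ncard_union_le _ _
          _ ≤ K + K := add_le_add hg hg'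
          _ = 2 * K := by ring
      have := spark_null B hspark (fun k => Yg k j - Yg' k j) hHfin.toFinset hcard
        (fun k hk => hHfin.mem_toFinset.mpr (hsuppH k hk)) (hker j)
      have := congrFun this k
      simpa [sub_eq_zero] using this
    · exact hlow j hj k
  funext i j
  exact hall j i

open scoped Classical in
/-- The recovery scheme: scan a list of candidate graphs and return the graph matrix
of the first good one consistent with the measurements. -/
def recover {n m : ℕ} (K μs : ℕ) (Y : SimpleGraph (Fin n) → (Fin n → Fin n → ℝ)) :
    List (SimpleGraph (Fin n)) → (Fin m → Fin n → ℝ) → (Fin m → Fin n → ℝ) →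
      (Fin n → Fin n → ℝ)
  | [] => fun _ _ => 0
  | g :: l => fun A B =>
      if Set.ncard {v : Fin n | μs < gdeg g v} ≤ K ∧ matMul B (Y g) = A then Y g
      else recover K μs Y l A B

lemma recover_measurable {n m : ℕ} (K μs : ℕ) (Y : SimpleGraph (Fin n) → (Fin n → Fin n → ℝ))
    (l : List (SimpleGraph (Fin n))) :
    Measurable (fun q : (Fin m → Fin n → ℝ) × (Fin m → Fin n → ℝ) =>
      recover K μs Y l q.1 q.2) := by
  classical
  induction l with
  | nil => simp only [recover]; exact measurable_const
  | cons g l ih =>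
      have hset : MeasurableSet {q : (Fin m → Fin n → ℝ) × (Fin m → Fin n → ℝ) |
          Set.ncard {v : Fin n | μs < gdeg g v} ≤ K ∧ matMul q.2 (Y g) = q.1} := by
        by_cases hgood : Set.ncard {v : Fin n | μs < gdeg g v} ≤ K
        · have : {q : (Fin m → Fin n → ℝ) × (Fin m → Fin n → ℝ) |
              Set.ncard {v : Fin n | μs < gdeg g v} ≤ K ∧ matMul q.2 (Y g) = q.1} =
              ⋂ i, ⋂ j, {q : (Fin m → Fin n → ℝ) × (Fin m → Fin n → ℝ) |
                matMul q.2 (Y g) i j = q.1 i j} := by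
            ext q
            simp only [Set.mem_setOf_eq, Set.mem_iInter, hgood, true_and]
            constructor
            · intro h i j; rw [h]
            · intro h; funext i j; exact h i j
          rw [this]
          refine MeasurableSet.iInter fun i => MeasurableSet.iInter fun j => ?_
          apply measurableSet_eq_fun
          · simp only [matMul]
            apply Finset.measurable_sum
            intro k _
            exact ((measurable_pi_apply k).comp
              ((measurable_pi_apply i).comp measurable_snd)).mul_const _
          · exact (measurable_pi_apply j).comp ((measurable_pi_apply i).comp measurable_fst)
        · have : {q : (Fin m → Fin n → ℝ) × (Fin m → Fin n → ℝ) |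
              Set.ncard {v : Fin n | μs < gdeg g v} ≤ K ∧ matMul q.2 (Y g) = q.1} = ∅ := by
            ext q; simp [hgood]
          rw [this]; exact MeasurableSet.empty
      simpa only [recover] using Measurable.ite hset measurable_const ih

lemma recover_eq {n m : ℕ} (K μs : ℕ) (Y : SimpleGraph (Fin n) → (Fin n → Fin n → ℝ))
    (Z : Fin n → Fin n → ℝ) (A B : Fin m → Fin n → ℝ) :
    ∀ l : List (SimpleGraph (Fin n)),
      (∀ g ∈ l, Set.ncard {v : Fin n | μs < gdeg g v} ≤ K → matMul B (Y g) = A → Y g = Z) →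
      (∃ g ∈ l, Set.ncard {v : Fin n | μs < gdeg g v} ≤ K ∧ matMul B (Y g) = A) →
      recover K μs Y l A B = Z := by
  classical
  intro l
  induction l with
  | nil => rintro _ ⟨g, hg, _⟩; exact absurd hg List.not_mem_nil
  | cons g l ih =>
      intro hcons hex
      simp only [recover]
      by_cases hcond : Set.ncard {v : Fin n | μs < gdeg g v} ≤ K ∧ matMul B (Y g) = A
      · rw [if_pos hcond]
        exact hcons g List.mem_cons_self hcond.1 hcond.2
      · rw [if_neg hcond]
        apply ih
        · intro g' hg'; exact hcons g' (List.mem_cons_of_mem g hg')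
        · obtain ⟨g', hg', hcond'⟩ := hex
          rcases List.mem_cons.mp hg' with rfl | hmem
          · exact absurd hcond' hcond
          · exact ⟨g', hmem, hcond'⟩

/-- **Achievability of noiseless recovery for `(μ, K, ρ)`-sparse graph distributions.**
Let `G ~ 𝒢ₙ` be drawn from a `(μ, K, ρ)`-sparse distribution on simple graphs on `n`
vertices, let `Y(·)` be a graph-matrix assignment, and let `B` be an `m × n` random matrix,
independent of `G`, that almost surely satisfies `spark(B) > 2K` and `δ_{2μ} + δ_{3μ} < 1`.
With noiseless measurements `A = B·Y(G)`, there exists a measurable estimator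
`X = f(A, B)` (realized by the three-stage recovery scheme) with `P(X ≠ Y(G)) ≤ ρ`. -/
theorem three_stage_achievability {n m K μs : ℕ}
    (hn : 0 < n) (hm : 0 < m) (hK : 0 < K) (hμs : 0 < μs)
    {Ω : Type*} [MeasurableSpace Ω] (μ : Measure Ω) [IsProbabilityMeasure μ]
    (G : Ω → SimpleGraph (Fin n)) (B : Ω → (Fin m → Fin n → ℝ))
    (hGmeas : Measurable G) (hBmeas : Measurable B)
    (hG_B : IndepFun G B μ)
    (Y : SimpleGraph (Fin n) → (Fin n → Fin n → ℝ))
    (hY : ∀ g, IsGraphMatrix g (Y g))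
    (ρ : ℝ) (hρ : 0 ≤ ρ)
    -- the graph distribution is `(μ, K, ρ)`-sparse
    (hsparse : μ {ω | K < Set.ncard {v : Fin n | μs < gdeg (G ω) v}} ≤ ENNReal.ofReal ρ)
    -- almost surely, `spark(B) > 2K` and `δ_{2μ} + δ_{3μ} < 1`
    (hB : ∀ᵐ ω ∂μ, (2 * K : ℕ∞) < spark (B ω) ∧ ric (B ω) (2 * μs) + ric (B ω) (3 * μs) < 1) :
    ∃ f : (Fin m → Fin n → ℝ) → (Fin m → Fin n → ℝ) → (Fin n → Fin n → ℝ),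
      Measurable (fun q : (Fin m → Fin n → ℝ) × (Fin m → Fin n → ℝ) => f q.1 q.2) ∧
      μ {ω | f (matMul (B ω) (Y (G ω))) (B ω) ≠ Y (G ω)} ≤ ENNReal.ofReal ρ := by
  classical
  set l : List (SimpleGraph (Fin n)) := Finset.univ.toList with hl
  refine ⟨recover K μs Y l, recover_measurable K μs Y l, ?_⟩
  -- the failure event is contained in the union of the two bad events
  set E1 : Set Ω := {ω | K < Set.ncard {v : Fin n | μs < gdeg (G ω) v}} with hE1
  set E2 : Set Ω := {ω | ¬ ((2 * K : ℕ∞) < spark (B ω) ∧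
      ric (B ω) (2 * μs) + ric (B ω) (3 * μs) < 1)} with hE2
  have hE2zero : μ E2 = 0 := by
    rw [hE2]
    exact (MeasureTheory.ae_iff.mp hB)
  have hsub : {ω | recover K μs Y l (matMul (B ω) (Y (G ω))) (B ω) ≠ Y (G ω)}
      ⊆ E1 ∪ E2 := by
    intro ω hω
    by_contra hcon
    simp only [Set.mem_union, hE1, hE2, Set.mem_setOf_eq, not_or, not_not, not_lt] at hcon
    obtain ⟨hgood, hspark, hric⟩ := hcon
    have hric2 : ric (B ω) (2 * μs) < 1 := by
      have := ric_nonneg (B ω) (3 * μs)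
      linarith
    apply hω
    apply recover_eq K μs Y (Y (G ω)) (matMul (B ω) (Y (G ω))) (B ω) l
    · intro g _ hgK hgA
      exact graph_matrix_uniq (B ω) hspark hric2 g (G ω) (Y g) (Y (G ω))
        (hY g) (hY (G ω)) hgK hgood hgA
    · exact ⟨G ω, by simp [hl], hgood, rfl⟩
  calc μ {ω | recover K μs Y l (matMul (B ω) (Y (G ω))) (B ω) ≠ Y (G ω)}
      ≤ μ (E1 ∪ E2) := measure_mono hsub
    _ ≤ μ E1 + μ E2 := measure_union_le _ _
    _ = μ E1 := by rw [hE2zero, add_zero]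
    _ ≤ ENNReal.ofReal ρ := hsparse

end
end

section
/- Fix positive integers m, n, K, μ. There exists a map f : ℝ^{m×n} × ℝ^{m×n} → ℝ^{n×n} such that for every matrix B ∈ ℝ^{m×n} with spark(B) > 2K whose restricted isometry constants satisfy δ_{2μ} + δ_{3μ} < 1, and for every symmetric matrix Y ∈ ℝ^{n×n} all but at most K of whose columns have at most μ nonzero entries, one has f(B·Y, B) = Y. -/
noncomputable section

namespace ThreeStageAux

variable {m n : ℕ}

lemma ric_set_nonempty (B : Fin m → Fin n → ℝ) (s : ℕ) :
    ∃ δ : ℝ, 0 ≤ δ ∧ ∀ x : Fin n → ℝ, Set.ncard {j | x j ≠ 0} ≤ s →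
      (1 - δ) * (∑ j, x j ^ 2) ≤ (∑ i, (∑ j, B i j * x j) ^ 2) ∧
      (∑ i, (∑ j, B i j * x j) ^ 2) ≤ (1 + δ) * (∑ j, x j ^ 2) := by
  classical
  set C : ℝ := ∑ i, ∑ j, (B i j) ^ 2 with hC
  refine ⟨max 1 C, le_trans zero_le_one (le_max_left _ _), fun x _ => ?_⟩
  have hxs : 0 ≤ ∑ j, x j ^ 2 := Finset.sum_nonneg fun j _ => sq_nonneg _
  constructor
  · have h1 : 1 - max 1 C ≤ 0 := by
      have := le_max_left 1 C; linarith
    have h2 : (1 - max 1 C) * (∑ j, x j ^ 2) ≤ 0 :=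
      mul_nonpos_of_nonpos_of_nonneg h1 hxs
    exact h2.trans (Finset.sum_nonneg fun i _ => sq_nonneg _)
  · have key : ∀ i : Fin m, (∑ j, B i j * x j) ^ 2 ≤ (∑ j, (B i j) ^ 2) * (∑ j, x j ^ 2) :=
      fun i => Finset.sum_mul_sq_le_sq_mul_sq _ _ _
    calc ∑ i, (∑ j, B i j * x j) ^ 2
        ≤ ∑ i, (∑ j, (B i j) ^ 2) * (∑ j, x j ^ 2) :=
          Finset.sum_le_sum fun i _ => key i
      _ = C * ∑ j, x j ^ 2 := by rw [← Finset.sum_mul]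
      _ ≤ (1 + max 1 C) * ∑ j, x j ^ 2 := by
          apply mul_le_mul_of_nonneg_right _ hxs
          have := le_max_right 1 C; linarith

lemma ric_nonneg (B : Fin m → Fin n → ℝ) (s : ℕ) : 0 ≤ ric B s := by
  apply le_csInf
  · obtain ⟨δ, hδ⟩ := ric_set_nonempty B s
    exact ⟨δ, hδ⟩
  · rintro δ ⟨hδ0, -⟩
    exact hδ0

lemma kernel_sparse (B : Fin m → Fin n → ℝ) (s : ℕ) (hric : ric B s < 1)
    (x : Fin n → ℝ) (hx : Set.ncard {j | x j ≠ 0} ≤ s)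
    (hker : ∀ i, ∑ j, B i j * x j = 0) : x = 0 := by
  by_contra hxne
  have hex : ∃ j, x j ≠ 0 := by
    by_contra h; push_neg at h; exact hxne (funext h)
  obtain ⟨j0, hj0⟩ := hex
  have hpos : 0 < ∑ j, x j ^ 2 :=
    Finset.sum_pos' (fun j _ => sq_nonneg _) ⟨j0, Finset.mem_univ _, by positivity⟩
  have h1 : (1 : ℝ) ≤ ric B s := by
    apply le_csInf
    · obtain ⟨δ, hδ⟩ := ric_set_nonempty B s
      exact ⟨δ, hδ⟩
    · rintro δ ⟨hδ0, hδ⟩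
      obtain ⟨hlo, -⟩ := hδ x hx
      have hz : (∑ i, (∑ j, B i j * x j) ^ 2) = 0 := by simp [hker]
      rw [hz] at hlo
      nlinarith
  linarith

lemma spark_le_of_kernel (B : Fin m → Fin n → ℝ) (x : Fin n → ℝ) (hxne : x ≠ 0)
    (T : Finset (Fin n)) (hsupp : ∀ j, x j ≠ 0 → j ∈ T)
    (hker : ∀ i, ∑ j, B i j * x j = 0) : spark B ≤ (T.card : ℕ∞) := by
  classical
  apply sInf_le
  refine ⟨T, rfl, fun hli => ?_⟩
  have hsum : ∑ j : {a // a ∈ T}, (x j.1) • (fun i => B i j.1) = (0 : Fin m → ℝ) := by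
    funext i
    rw [Finset.sum_apply]
    simp only [Pi.zero_apply]
    have h1 : ∑ j : {a // a ∈ T}, ((x j.1) • fun i => B i j.1) i
        = ∑ j ∈ T, x j * B i j := by
      rw [← Finset.sum_attach T (fun j => x j * B i j)]
      rfl
    rw [h1]
    have h2 : ∑ j ∈ T, x j * B i j = ∑ j, x j * B i j := by
      apply Finset.sum_subset (Finset.subset_univ T)
      intro j _ hj
      have : x j = 0 := by
        by_contra hxj; exact hj (hsupp j hxj)
      simp [this]
    rw [h2]
    have := hker i
    rw [← this]
    exact Finset.sum_congr rfl fun j _ => mul_comm _ _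
  have hall := Fintype.linearIndependent_iff.mp hli (fun j => x j.1) hsum
  apply hxne
  funext j
  by_cases hj : x j = 0
  · simpa using hj
  · exact absurd (hall ⟨j, hsupp j hj⟩) hj

lemma uniqueness {K μ : ℕ} (B : Fin m → Fin n → ℝ)
    (hspark : (2 * K : ℕ∞) < spark B)
    (hric : ric B (2 * μ) + ric B (3 * μ) < 1)
    (Y Y' : Fin n → Fin n → ℝ)
    (hsymY : ∀ i j, Y i j = Y j i) (hsymY' : ∀ i j, Y' i j = Y' j i)
    (hY : Set.ncard {j : Fin n | μ < Set.ncard {i : Fin n | Y i j ≠ 0}} ≤ K)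
    (hY' : Set.ncard {j : Fin n | μ < Set.ncard {i : Fin n | Y' i j ≠ 0}} ≤ K)
    (heq : matMul B Y = matMul B Y') : Y = Y' := by
  classical
  have hric2 : ric B (2 * μ) < 1 := by
    have := ric_nonneg B (3 * μ); linarith
  set D : Fin n → Fin n → ℝ := fun i j => Y i j - Y' i j with hD
  have hsymD : ∀ i j, D i j = D j i := fun i j => by
    simp only [hD, hsymY i j, hsymY' i j]
  have hkerD : ∀ j i, ∑ k, B i k * D k j = 0 := by
    intro j i
    have h1 : matMul B Y i j = matMul B Y' i j := by rw [heq]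
    simp only [matMul] at h1
    simp only [hD, mul_sub, Finset.sum_sub_distrib, h1, sub_self]
  set S : Set (Fin n) := {j | μ < Set.ncard {i : Fin n | Y i j ≠ 0}} ∪
      {j | μ < Set.ncard {i : Fin n | Y' i j ≠ 0}} with hS
  have hScard : Set.ncard S ≤ 2 * K := by
    calc Set.ncard S ≤ _ + _ := Set.ncard_union_le _ _
      _ ≤ 2 * K := by omega
  -- Step 1: columns outside S vanish
  have step1 : ∀ j ∉ S, ∀ k, D k j = 0 := by
    intro j hj k
    have hj1 : Set.ncard {i : Fin n | Y i j ≠ 0} ≤ μ := by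
      by_contra h; exact hj (Or.inl (by simpa using not_le.mp h))
    have hj2 : Set.ncard {i : Fin n | Y' i j ≠ 0} ≤ μ := by
      by_contra h; exact hj (Or.inr (by simpa using not_le.mp h))
    have hsub : {i : Fin n | D i j ≠ 0} ⊆
        {i : Fin n | Y i j ≠ 0} ∪ {i : Fin n | Y' i j ≠ 0} := by
      intro i hi
      by_contra h
      simp only [Set.mem_union, Set.mem_setOf_eq, not_or, not_not] at h
      exact hi (by simp [hD, h.1, h.2])
    have hcard : Set.ncard {i : Fin n | D i j ≠ 0} ≤ 2 * μ := by
      calc Set.ncard {i : Fin n | D i j ≠ 0}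
          ≤ Set.ncard ({i : Fin n | Y i j ≠ 0} ∪ {i : Fin n | Y' i j ≠ 0}) :=
            Set.ncard_le_ncard hsub (Set.toFinite _)
        _ ≤ _ + _ := Set.ncard_union_le _ _
        _ ≤ 2 * μ := by omega
    have := kernel_sparse B (2 * μ) hric2 (fun k => D k j) hcard (fun i => hkerD j i)
    exact congrFun this k
  -- Step 2: all columns vanish
  have step2 : ∀ j k, D k j = 0 := by
    intro j k
    by_cases hj : j ∈ S
    · by_contra hkj
      have hcolne : (fun k => D k j) ≠ 0 := by
        intro h0; exact hkj (congrFun h0 k)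
      have hsuppS : ∀ i, D i j ≠ 0 → i ∈ S.toFinset := by
        intro i hi
        rw [Set.mem_toFinset]
        by_contra hiS
        exact hi ((hsymD i j).trans (step1 i hiS j))
      have hle := spark_le_of_kernel B (fun k => D k j) hcolne S.toFinset hsuppS
        (fun i => hkerD j i)
      have hcardT : (S.toFinset.card : ℕ∞) ≤ (2 * K : ℕ∞) := by
        rw [Set.ncard_eq_toFinset_card'] at hScard
        exact_mod_cast hScard
      exact absurd (hle.trans hcardT) (not_le.mpr hspark)
    · exact step1 j hj k
  funext i j
  have := step2 j i
  simp only [hD] at this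
  linarith

end ThreeStageAux

/-- **Deterministic exact recovery of approximately column-sparse symmetric matrices.**
Fix positive integers `m, n, K, μ`.  There is a map `f : ℝ^{m×n} × ℝ^{m×n} → ℝ^{n×n}` such
that for every `B ∈ ℝ^{m×n}` with `spark(B) > 2K` and restricted isometry constants
satisfying `δ_{2μ} + δ_{3μ} < 1`, and every symmetric `Y ∈ ℝ^{n×n}` all but at most `K` of
whose columns have at most `μ` nonzero entries, one has `f(B·Y, B) = Y`. -/
theorem three_stage_exact_recovery {m n K μ : ℕ}
    (hm : 0 < m) (hn : 0 < n) (hK : 0 < K) (hμ : 0 < μ) :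
    ∃ f : (Fin m → Fin n → ℝ) × (Fin m → Fin n → ℝ) → (Fin n → Fin n → ℝ),
      ∀ B : Fin m → Fin n → ℝ,
        (2 * K : ℕ∞) < spark B →
        ric B (2 * μ) + ric B (3 * μ) < 1 →
        ∀ Y : Fin n → Fin n → ℝ,
          (∀ i j, Y i j = Y j i) →
          Set.ncard {j : Fin n | μ < Set.ncard {i : Fin n | Y i j ≠ 0}} ≤ K →
          f (matMul B Y, B) = Y := by
  classical
  refine ⟨fun p =>
    if h : ∃ Y : Fin n → Fin n → ℝ, (∀ i j, Y i j = Y j i) ∧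
        Set.ncard {j : Fin n | μ < Set.ncard {i : Fin n | Y i j ≠ 0}} ≤ K ∧
        matMul p.2 Y = p.1
    then h.choose else 0, ?_⟩
  intro B hspark hric Y hsym hcount
  have hex : ∃ Y' : Fin n → Fin n → ℝ, (∀ i j, Y' i j = Y' j i) ∧
      Set.ncard {j : Fin n | μ < Set.ncard {i : Fin n | Y' i j ≠ 0}} ≤ K ∧
      matMul (matMul B Y, B).2 Y' = (matMul B Y, B).1 :=
    ⟨Y, hsym, hcount, rfl⟩
  dsimp only
  rw [dif_pos hex]
  obtain ⟨h1, h2, h3⟩ := hex.choose_spec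
  exact ThreeStageAux.uniqueness B hspark hric _ Y h1 hsym h2 hcount h3

end
end

section
/- Let B ∈ ℝ^{m×n}, let K be a positive integer, and let δ ∈ [0,1) be such that (1−δ)·‖x‖₂² ≤ ‖Bx‖₂² for every x ∈ ℝⁿ with at most 2K nonzero entries. Let A ∈ ℝ^m, γ ≥ 0, Γ ≥ 0, and let y, y* ∈ ℝⁿ satisfy ‖By − A‖₂ ≤ γ and ‖By* − A‖₂ ≤ γ. Suppose e := y* − y can be decomposed as e = ē + f where ē has at most 2K nonzero entries and |f_i| ≤ 2Γ for every coordinate i. Then ‖e‖₂ ≤ 2γ/(1−δ) + 2nΓ·(1 + ‖B‖₂/(1−δ)), where ‖B‖₂ denotes the ℓ2 operator norm of B. -/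
noncomputable section

/-- Euclidean (`ℓ2`) norm of a finite real vector. -/
def norm2 {k : ℕ} (x : Fin k → ℝ) : ℝ :=
  Real.sqrt (∑ i, x i ^ 2)

/-- Matrix–vector product. -/
def matVec {m n : ℕ} (B : Fin m → Fin n → ℝ) (x : Fin n → ℝ) : Fin m → ℝ :=
  fun i => ∑ j, B i j * x j

/-- The `ℓ2` operator norm of an `m × n` real matrix, defined as the least nonnegative
constant `c` with `‖Bx‖₂ ≤ c‖x‖₂` for all `x`. -/
def opNorm {m n : ℕ} (B : Fin m → Fin n → ℝ) : ℝ :=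
  sInf {c : ℝ | 0 ≤ c ∧ ∀ x : Fin n → ℝ, norm2 (matVec B x) ≤ c * norm2 x}

lemma norm2_nonneg {k : ℕ} (x : Fin k → ℝ) : 0 ≤ norm2 x := Real.sqrt_nonneg _

lemma norm2_sq {k : ℕ} (x : Fin k → ℝ) : norm2 x ^ 2 = ∑ i, x i ^ 2 :=
  Real.sq_sqrt (by positivity)

lemma norm2_eq_norm {k : ℕ} (x : Fin k → ℝ) :
    norm2 x = ‖(WithLp.equiv 2 (Fin k → ℝ)).symm x‖ := by
  rw [EuclideanSpace.norm_eq]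
  simp [norm2, sq_abs]

lemma norm2_add_le {k : ℕ} (x y : Fin k → ℝ) :
    norm2 (fun i => x i + y i) ≤ norm2 x + norm2 y := by
  rw [norm2_eq_norm, norm2_eq_norm, norm2_eq_norm]
  exact norm_add_le ((WithLp.equiv 2 (Fin k → ℝ)).symm x) ((WithLp.equiv 2 (Fin k → ℝ)).symm y)

lemma frobenius_bound {m n : ℕ} (B : Fin m → Fin n → ℝ) (x : Fin n → ℝ) :
    norm2 (matVec B x) ≤ Real.sqrt (∑ i, ∑ j, B i j ^ 2) * norm2 x := by
  have h : ∀ i, (∑ j, B i j * x j) ^ 2 ≤ (∑ j, B i j ^ 2) * (∑ j, x j ^ 2) := fun i =>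
    Finset.sum_mul_sq_le_sq_mul_sq Finset.univ (B i) x
  have hsum : ∑ i, (∑ j, B i j * x j) ^ 2 ≤ (∑ i, ∑ j, B i j ^ 2) * (∑ j, x j ^ 2) := by
    rw [Finset.sum_mul]
    exact Finset.sum_le_sum fun i _ => h i
  calc norm2 (matVec B x) = Real.sqrt (∑ i, (∑ j, B i j * x j) ^ 2) := rfl
    _ ≤ Real.sqrt ((∑ i, ∑ j, B i j ^ 2) * (∑ j, x j ^ 2)) := Real.sqrt_le_sqrt hsum
    _ = Real.sqrt (∑ i, ∑ j, B i j ^ 2) * norm2 x := by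
        rw [Real.sqrt_mul (by positivity)]; rfl

lemma opNorm_mem_nonempty {m n : ℕ} (B : Fin m → Fin n → ℝ) :
    (Real.sqrt (∑ i, ∑ j, B i j ^ 2)) ∈
      {c : ℝ | 0 ≤ c ∧ ∀ x : Fin n → ℝ, norm2 (matVec B x) ≤ c * norm2 x} :=
  ⟨Real.sqrt_nonneg _, frobenius_bound B⟩

lemma opNorm_nonneg {m n : ℕ} (B : Fin m → Fin n → ℝ) : 0 ≤ opNorm B :=
  le_csInf ⟨_, opNorm_mem_nonempty B⟩ fun _ hc => hc.1

lemma norm2_eq_zero {k : ℕ} {x : Fin k → ℝ} (h : norm2 x = 0) : x = 0 := by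
  have hs : ∑ i, x i ^ 2 = 0 := Real.sqrt_eq_zero (by positivity) |>.mp h
  funext i
  have := (Finset.sum_eq_zero_iff_of_nonneg (fun j _ => by positivity)).mp hs i (Finset.mem_univ i)
  exact pow_eq_zero_iff (n := 2) (by norm_num) |>.mp this

lemma opNorm_bound {m n : ℕ} (B : Fin m → Fin n → ℝ) (x : Fin n → ℝ) :
    norm2 (matVec B x) ≤ opNorm B * norm2 x := by
  rcases eq_or_lt_of_le (norm2_nonneg x) with h0 | h0
  · have hx : x = 0 := norm2_eq_zero h0.symm
    subst hx
    have hmv : matVec B (0 : Fin n → ℝ) = 0 := by funext i; simp [matVec]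
    rw [hmv, ← h0, mul_zero]
    simp [norm2]
  · have hle : norm2 (matVec B x) / norm2 x ≤ opNorm B := by
      apply le_csInf ⟨_, opNorm_mem_nonempty B⟩
      intro c hc
      rw [div_le_iff₀ h0]
      exact hc.2 x
    calc norm2 (matVec B x) = norm2 (matVec B x) / norm2 x * norm2 x := by field_simp
      _ ≤ opNorm B * norm2 x := mul_le_mul_of_nonneg_right hle (norm2_nonneg x)

/-- **Key deterministic estimate of the achievability proof (Theorem 3).**
Let `B ∈ ℝ^{m×n}`, `K > 0`, and `δ ∈ [0,1)` satisfy the lower restricted isometry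
inequality `(1−δ)‖x‖₂² ≤ ‖Bx‖₂²` for every `2K`-sparse `x`.  If `y, y*` are both
`γ`-feasible for the measurements `A` (i.e. `‖By − A‖₂ ≤ γ` and `‖By* − A‖₂ ≤ γ`) and
`e = y* − y = ē + f` with `ē` `2K`-sparse and `|f_i| ≤ 2Γ` for every `i`, then
`‖e‖₂ ≤ 2γ/(1−δ) + 2nΓ(1 + ‖B‖₂/(1−δ))`. -/
theorem consistency_check_estimate {m n K : ℕ} (hK : 0 < K)
    (B : Fin m → Fin n → ℝ)
    {δ : ℝ} (hδ0 : 0 ≤ δ) (hδ1 : δ < 1)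
    (hRIP : ∀ x : Fin n → ℝ, Set.ncard {j | x j ≠ 0} ≤ 2 * K →
      (1 - δ) * norm2 x ^ 2 ≤ norm2 (matVec B x) ^ 2)
    (A : Fin m → ℝ) (γ Γ : ℝ) (hγ : 0 ≤ γ) (hΓ : 0 ≤ Γ)
    (y ystar : Fin n → ℝ)
    (hy : norm2 (fun i => matVec B y i - A i) ≤ γ)
    (hystar : norm2 (fun i => matVec B ystar i - A i) ≤ γ)
    (ebar f : Fin n → ℝ)
    (hdecomp : ∀ j, ystar j - y j = ebar j + f j)
    (hebar : Set.ncard {j | ebar j ≠ 0} ≤ 2 * K)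
    (hf : ∀ j, |f j| ≤ 2 * Γ) :
    norm2 (fun j => ystar j - y j)
      ≤ 2 * γ / (1 - δ) + 2 * n * Γ * (1 + opNorm B / (1 - δ)) := by
  have h1δ : (0:ℝ) < 1 - δ := by linarith
  set e : Fin n → ℝ := fun j => ystar j - y j with he
  -- norm of f
  have hf2 : ∀ j, f j ^ 2 ≤ (2 * Γ) ^ 2 := fun j => by
    have := hf j
    nlinarith [abs_nonneg (f j), sq_abs (f j)]
  have hnf : norm2 f ≤ 2 * n * Γ := by
    have h1 : ∑ j, f j ^ 2 ≤ (n : ℝ) * (2 * Γ) ^ 2 := by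
      calc ∑ j, f j ^ 2 ≤ ∑ _j : Fin n, (2 * Γ) ^ 2 := Finset.sum_le_sum fun j _ => hf2 j
        _ = (n : ℝ) * (2 * Γ) ^ 2 := by simp [mul_comm]
    have h2 : norm2 f ≤ Real.sqrt ((n : ℝ) * (2 * Γ) ^ 2) := Real.sqrt_le_sqrt h1
    have h3 : Real.sqrt ((n : ℝ) * (2 * Γ) ^ 2) = Real.sqrt n * (2 * Γ) := by
      rw [Real.sqrt_mul (by positivity), Real.sqrt_sq (by positivity)]
    have h4 : Real.sqrt (n : ℝ) ≤ (n : ℝ) := by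
      rcases Nat.eq_zero_or_pos n with hn | hn
      · simp [hn]
      · have h1n : (1:ℝ) ≤ n := by exact_mod_cast hn
        nlinarith [Real.sq_sqrt (by positivity : (0:ℝ) ≤ (n:ℝ)), Real.sqrt_nonneg (n:ℝ),
          sq_nonneg (Real.sqrt (n:ℝ) - 1)]
    calc norm2 f ≤ Real.sqrt n * (2 * Γ) := by rw [← h3]; exact h2
      _ ≤ (n : ℝ) * (2 * Γ) := mul_le_mul_of_nonneg_right h4 (by positivity)
      _ = 2 * n * Γ := by ring
  have hnf0 : 0 ≤ norm2 f := norm2_nonneg f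
  -- triangle: ‖e‖ ≤ ‖ebar‖ + ‖f‖
  have htri : norm2 e ≤ norm2 ebar + norm2 f := by
    have : e = fun j => ebar j + f j := funext fun j => hdecomp j
    rw [this]
    exact norm2_add_le ebar f
  -- ‖Be‖ ≤ 2γ
  have hBe : norm2 (matVec B e) ≤ 2 * γ := by
    have hlin : matVec B e = fun i =>
        (matVec B ystar i - A i) + -(matVec B y i - A i) := by
      funext i
      simp only [matVec, he]
      have hrw : ∀ j, B i j * (ystar j - y j) = B i j * ystar j - B i j * y j :=
        fun j => by ring
      simp_rw [hrw, Finset.sum_sub_distrib]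
      ring
    have hneg : norm2 (fun i => -(matVec B y i - A i)) = norm2 (fun i => matVec B y i - A i) := by
      simp only [norm2]
      congr 1
      exact Finset.sum_congr rfl fun i _ => by ring
    calc norm2 (matVec B e)
        ≤ norm2 (fun i => matVec B ystar i - A i) + norm2 (fun i => -(matVec B y i - A i)) := by
          rw [hlin]; exact norm2_add_le _ _
      _ ≤ γ + γ := by rw [hneg]; exact add_le_add hystar hy
      _ = 2 * γ := by ring
  -- ‖B ebar‖ ≤ ‖Be‖ + ‖Bf‖
  have hBf : norm2 (matVec B f) ≤ opNorm B * norm2 f := opNorm_bound B f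
  have hBebar : norm2 (matVec B ebar) ≤ 2 * γ + opNorm B * norm2 f := by
    have hlin : matVec B ebar = fun i => matVec B e i + -(matVec B f i) := by
      funext i
      simp only [matVec, he]
      simp_rw [hdecomp, mul_add, Finset.sum_add_distrib]
      ring
    have hneg : norm2 (fun i => -(matVec B f i)) = norm2 (matVec B f) := by
      simp only [norm2]
      congr 1
      exact Finset.sum_congr rfl fun i _ => by ring
    calc norm2 (matVec B ebar)
        ≤ norm2 (matVec B e) + norm2 (fun i => -(matVec B f i)) := by
          rw [hlin]; exact norm2_add_le _ _
      _ ≤ 2 * γ + opNorm B * norm2 f := by rw [hneg]; exact add_le_add hBe hBf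
  -- RIP: (1-δ)‖ebar‖ ≤ ‖B ebar‖
  have hrip := hRIP ebar hebar
  have hne0 : 0 ≤ norm2 ebar := norm2_nonneg ebar
  have hBeb0 : 0 ≤ norm2 (matVec B ebar) := norm2_nonneg _
  have hkey : (1 - δ) * norm2 ebar ≤ norm2 (matVec B ebar) := by
    nlinarith [sq_nonneg (norm2 ebar), sq_nonneg ((1 - δ) * norm2 ebar - norm2 (matVec B ebar)),
      mul_nonneg hne0 hBeb0]
  -- combine
  have hop : 0 ≤ opNorm B := opNorm_nonneg B
  have hmain : norm2 e ≤ (2 * γ + 2 * n * Γ * ((1 - δ) + opNorm B)) / (1 - δ) := by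
    rw [le_div_iff₀ h1δ]
    have h5 : (1 - δ) * norm2 ebar ≤ 2 * γ + opNorm B * norm2 f :=
      le_trans hkey hBebar
    nlinarith [mul_le_mul_of_nonneg_left hnf (le_of_lt h1δ),
      mul_le_mul_of_nonneg_left hnf hop, mul_le_mul_of_nonneg_left htri (le_of_lt h1δ)]
  calc norm2 e ≤ (2 * γ + 2 * n * Γ * ((1 - δ) + opNorm B)) / (1 - δ) := hmain
    _ = 2 * γ / (1 - δ) + 2 * n * Γ * (1 + opNorm B / (1 - δ)) := by
        field_simp
        try ring

end
end
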